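/- Let p be an odd prime and g ∈ Z[X]. The number of pairs (x,y) with 1 ≤ x,y ≤ p(p-1), p ∤ xy, satisfying x^(g(x)) ≡ y (mod p) and y^(g(y)) ≡ x (mod p) equals Σ_{x0=1}^{p-1} Σ_{y0=1}^{p-1} gcd(p-1, g(x0)g(y0) − 1). -/

import Mathlib

open Finset

/-- In a finite cyclic group, the number of solutions of `x ^ k = 1` is `gcd (card G) k`. -/
lemma aux_card_pow_eq_one_eq_gcd {G : Type*} [Group G] [Fintype G] [IsCyclic G] [DecidableEq G]
    (k : ℕ) :
    (Finset.univ.filter fun x : G => x ^ k = 1).card = Nat.gcd (Fintype.card G) k := by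
  obtain ⟨g, hg⟩ := IsCyclic.exists_generator (α := G)
  set n := Fintype.card G with hn
  have hn0 : 0 < n := Fintype.card_pos
  set d := Nat.gcd n k with hd
  have hd0 : 0 < d := Nat.gcd_pos_of_pos_left _ hn0
  have hdn : d ∣ n := Nat.gcd_dvd_left _ _
  have hdk : d ∣ k := Nat.gcd_dvd_right _ _
  have hfilter : (Finset.univ.filter fun x : G => x ^ k = 1)
      = Finset.univ.filter fun x : G => x ^ d = 1 := by
    ext x
    simp only [mem_filter, mem_univ, true_and]
    constructor
    · intro h
      exact pow_gcd_eq_one.mpr ⟨pow_card_eq_one, h⟩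
    · intro h
      obtain ⟨c, hc⟩ := hdk
      rw [hc, pow_mul, h, one_pow]
  rw [hfilter]
  refine le_antisymm (IsCyclic.card_pow_eq_one_le hd0) ?_
  have horder : orderOf g = n := by
    rw [hn, ← Nat.card_eq_fintype_card]
    exact orderOf_eq_card_of_forall_mem_zpowers hg
  have hnd0 : 0 < n / d := Nat.div_pos (Nat.le_of_dvd hn0 hdn) hd0
  have hlt : ∀ j ∈ Finset.range d, j * (n / d) < orderOf g := by
    intro j hj
    rw [horder]
    calc j * (n / d) < d * (n / d) := (Nat.mul_lt_mul_right hnd0).mpr (Finset.mem_range.mp hj)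
      _ = n := Nat.mul_div_cancel' hdn
  have key : (Finset.range d).card ≤
      (Finset.univ.filter fun x : G => x ^ d = 1).card := by
    apply Finset.card_le_card_of_injOn (fun j => g ^ (j * (n / d)))
    · intro j hj
      simp only [Finset.mem_coe, mem_filter, mem_univ, true_and]
      rw [← pow_mul, mul_assoc, Nat.div_mul_cancel hdn, mul_comm j n, pow_mul, ← horder,
        pow_orderOf_eq_one, one_pow]
    · intro j1 h1 j2 h2 heq
      have := pow_injOn_Iio_orderOf (Set.mem_Iio.mpr (hlt j1 h1)) (Set.mem_Iio.mpr (hlt j2 h2)) heq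
      exact Nat.eq_of_mul_eq_mul_right hnd0 this
  simpa using key

/-- The number of nonzero `a : ZMod p` with `a ^ M = 1` (integer power) is
`gcd (p-1) M`. -/
lemma aux_card_zmod (p : ℕ) [Fact p.Prime] (M : ℤ) :
    (Finset.univ.filter fun a : ZMod p => a ≠ 0 ∧ a ^ M = 1).card
      = Int.gcd ((p : ℤ) - 1) M := by
  classical
  have key : ∀ u : (ZMod p)ˣ, u ^ M = 1 ↔ u ^ M.natAbs = 1 := by
    intro u
    rw [← orderOf_dvd_iff_zpow_eq_one, ← Int.dvd_natAbs, Int.natCast_dvd_natCast,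
      orderOf_dvd_iff_pow_eq_one]
  have h1 : (Finset.univ.filter fun u : (ZMod p)ˣ => u ^ M.natAbs = 1).card
      = (Finset.univ.filter fun a : ZMod p => a ≠ 0 ∧ a ^ M = 1).card := by
    refine Finset.card_bij (fun u _ => (u : ZMod p)) ?_ ?_ ?_
    · intro u hu
      simp only [mem_filter, mem_univ, true_and] at hu ⊢
      refine ⟨u.ne_zero, ?_⟩
      have : u ^ M = 1 := (key u).mpr hu
      calc (u : ZMod p) ^ M = ((u ^ M : (ZMod p)ˣ) : ZMod p) :=
            (Units.val_zpow_eq_zpow_val u M).symm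
        _ = 1 := by rw [this]; rfl
    · intro u1 _ u2 _ h
      exact Units.ext h
    · intro a ha
      simp only [mem_filter, mem_univ, true_and] at ha
      obtain ⟨ha0, haM⟩ := ha
      have hu : IsUnit a := isUnit_iff_ne_zero.mpr ha0
      refine ⟨hu.unit, ?_, hu.unit_spec⟩
      simp only [mem_filter, mem_univ, true_and]
      rw [← key]
      apply Units.ext
      rw [Units.val_zpow_eq_zpow_val, hu.unit_spec, haM, Units.val_one]
  rw [← h1, aux_card_pow_eq_one_eq_gcd, ZMod.card_units]
  have : ((p : ℤ) - 1) = ((p - 1 : ℕ) : ℤ) := by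
    have := (Fact.out : p.Prime).two_le
    push_cast [Nat.cast_sub (by omega : 1 ≤ p)]
    ring
  rw [this, Int.gcd]
  simp

/-- representative of `x` mod `m` in `[1, m]`. -/
def auxRep (m x : ℕ) : ℕ := if x % m = 0 then m else x % m

lemma auxRep_mem {m : ℕ} (hm : 0 < m) (x : ℕ) : auxRep m x ∈ Finset.Icc 1 m := by
  unfold auxRep
  have := Nat.mod_lt x hm
  split <;> simp [Finset.mem_Icc] <;> omega

lemma auxRep_modeq (m x : ℕ) : auxRep m x ≡ x [MOD m] := by
  unfold auxRep Nat.ModEq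
  split_ifs with h
  · rw [Nat.mod_self, h]
  · exact Nat.mod_mod_of_dvd x dvd_rfl

lemma aux_Icc_unique {m : ℕ} {a b : ℕ} (ha : a ∈ Finset.Icc 1 m) (hb : b ∈ Finset.Icc 1 m)
    (h : a ≡ b [MOD m]) : a = b := by
  simp only [Finset.mem_Icc] at ha hb
  have hd : (m : ℤ) ∣ (b : ℤ) - (a : ℤ) := h.dvd
  have habs : |(b : ℤ) - (a : ℤ)| < (m : ℤ) := by
    rw [abs_sub_lt_iff]; constructor <;> omega
  have := Int.eq_zero_of_abs_lt_dvd hd habs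
  omega

lemma auxRep_eq_iff {m : ℕ} (hm : 0 < m) {x x0 : ℕ} (hx0 : x0 ∈ Finset.Icc 1 m) :
    auxRep m x = x0 ↔ x ≡ x0 [MOD m] := by
  constructor
  · intro h
    rw [← h]
    exact (auxRep_modeq m x).symm
  · intro h
    exact aux_Icc_unique (auxRep_mem hm x) hx0 ((auxRep_modeq m x).trans h)

theorem stmt_14 (p : ℕ) [Fact p.Prime] (hp2 : p ≠ 2) (g : Polynomial ℤ) :
    (((Finset.Icc 1 (p * (p - 1))) ×ˢ (Finset.Icc 1 (p * (p - 1)))).filter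
        fun xy : ℕ × ℕ => ¬ p ∣ xy.1 ∧ ¬ p ∣ xy.2 ∧
          (xy.1 : ZMod p) ^ (g.eval (xy.1 : ℤ)) = (xy.2 : ZMod p) ∧
          (xy.2 : ZMod p) ^ (g.eval (xy.2 : ℤ)) = (xy.1 : ZMod p)).card =
      ∑ x0 ∈ Finset.Icc 1 (p - 1), ∑ y0 ∈ Finset.Icc 1 (p - 1),
        Int.gcd ((p : ℤ) - 1) (g.eval (x0 : ℤ) * g.eval (y0 : ℤ) - 1) := by
  classical
  have hp : p.Prime := Fact.out
  have hp1 : 2 ≤ p := hp.two_le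
  set n := p - 1 with hn
  have hn0 : 0 < n := by omega
  have hpn0 : 0 < p * n := by positivity
  haveI : NeZero (p * n) := ⟨by omega⟩
  have hco : Nat.Coprime p n := by
    have h1 : p - n = 1 := by omega
    refine (Nat.coprime_sub_self_left (by omega)).mp ?_
    rw [h1]
    exact Nat.coprime_one_left n
  have hcast : ((p : ℤ) - 1) = ((n : ℕ) : ℤ) := by
    push_cast [hn, Nat.cast_sub (by omega : 1 ≤ p)]
    ring
  -- congruence of integer powers of a nonzero element of `ZMod p`
  have hzpow_congr : ∀ (a : ZMod p), a ≠ 0 → ∀ m m' : ℤ, ((n : ℕ) : ℤ) ∣ m - m' →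
      a ^ m = a ^ m' := by
    intro a ha m m' hdvd
    obtain ⟨k, hk⟩ := hdvd
    have hm : m = m' + (n : ℤ) * k := by omega
    have h1 : a ^ ((n : ℕ) : ℤ) = 1 := by
      rw [zpow_natCast]
      exact ZMod.pow_card_sub_one_eq_one ha
    rw [hm, zpow_add₀ ha, zpow_mul, h1, one_zpow, mul_one]
  -- polynomial evaluation congruence
  have heval_congr : ∀ x x' : ℕ, x ≡ x' [MOD n] →
      ((n : ℕ) : ℤ) ∣ g.eval (x : ℤ) - g.eval (x' : ℤ) := by
    intro x x' h
    have h1 : ((n : ℕ) : ℤ) ∣ (x : ℤ) - (x' : ℤ) := (Nat.ModEq.dvd h.symm)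
    exact dvd_trans h1 (Polynomial.sub_dvd_eval_sub _ _ g)
  -- CRT existence
  have hcrt_ex : ∀ (a : ZMod p) (u : ZMod n), ∃ x ∈ Finset.Icc 1 (p * n),
      ((x : ℕ) : ZMod p) = a ∧ ((x : ℕ) : ZMod n) = u := by
    intro a u
    let e := ZMod.chineseRemainder hco
    set z : ZMod (p * n) := e.symm (a, u) with hz
    refine ⟨if z.val = 0 then p * n else z.val, ?_, ?_⟩
    · have := ZMod.val_lt z
      split <;> simp [Finset.mem_Icc] <;> omega
    · have hxz : (((if z.val = 0 then p * n else z.val) : ℕ) : ZMod (p * n)) = z := by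
        split_ifs with h
        · rw [ZMod.natCast_self]
          exact ((ZMod.val_eq_zero z).mp h).symm
        · exact ZMod.natCast_zmod_val z
      have he : e ((((if z.val = 0 then p * n else z.val) : ℕ)) : ZMod (p * n)) = (a, u) := by
        rw [hxz, hz, RingEquiv.apply_symm_apply]
      set x : ℕ := if z.val = 0 then p * n else z.val with hxdef
      have h1 : (e ((x : ℕ) : ZMod (p * n))).1 = ((x : ℕ) : ZMod p) := by
        rw [map_natCast e x]
        exact map_natCast (RingHom.fst (ZMod p) (ZMod n)) x
      have h2 : (e ((x : ℕ) : ZMod (p * n))).2 = ((x : ℕ) : ZMod n) := by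
        rw [map_natCast e x]
        exact map_natCast (RingHom.snd (ZMod p) (ZMod n)) x
      rw [he] at h1 h2
      exact ⟨h1.symm, h2.symm⟩
  -- CRT uniqueness
  have hcrt_uniq : ∀ x x' : ℕ, x ∈ Finset.Icc 1 (p * n) → x' ∈ Finset.Icc 1 (p * n) →
      ((x : ℕ) : ZMod p) = ((x' : ℕ) : ZMod p) → x ≡ x' [MOD n] → x = x' := by
    intro x x' hx hx' hzp hzn
    have h1 : x ≡ x' [MOD p] := (ZMod.natCast_eq_natCast_iff _ _ _).mp hzp
    have h2 : x ≡ x' [MOD p * n] := (Nat.modEq_and_modEq_iff_modEq_mul hco).mp ⟨h1, hzn⟩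
    exact aux_Icc_unique hx hx' h2
  -- rewrite the RHS as a sum over the product
  rw [← Finset.sum_product']
  -- fiberwise decomposition of the LHS
  rw [Finset.card_eq_sum_card_fiberwise
    (f := fun xy : ℕ × ℕ => (auxRep n xy.1, auxRep n xy.2))
    (t := Finset.Icc 1 n ×ˢ Finset.Icc 1 n)
    (fun xy _ => Finset.mem_product.mpr ⟨auxRep_mem hn0 _, auxRep_mem hn0 _⟩)]
  refine Finset.sum_congr rfl ?_
  rintro ⟨x0, y0⟩ hq
  obtain ⟨hx0, hy0⟩ := Finset.mem_product.mp hq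
  set M : ℤ := g.eval (x0 : ℤ) * g.eval (y0 : ℤ) - 1 with hM
  rw [← aux_card_zmod p M]
  -- bijection between the fiber and the solution set
  refine Finset.card_bij (fun xy _ => ((xy.1 : ℕ) : ZMod p)) ?_ ?_ ?_
  · -- maps to
    rintro ⟨x, y⟩ hxy
    simp only [Finset.mem_filter, Finset.mem_product, Prod.mk.injEq] at hxy
    obtain ⟨⟨⟨hx, hy⟩, hpx, hpy, hpow1, hpow2⟩, hrx, hry⟩ := hxy
    simp only [Finset.mem_filter, Finset.mem_univ, true_and]
    have ha : ((x : ℕ) : ZMod p) ≠ 0 := by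
      rw [Ne, ZMod.natCast_eq_zero_iff]; exact hpx
    have hb : ((y : ℕ) : ZMod p) ≠ 0 := by
      rw [Ne, ZMod.natCast_eq_zero_iff]; exact hpy
    refine ⟨ha, ?_⟩
    have hxc : x ≡ x0 [MOD n] := (auxRep_eq_iff hn0 hx0).mp hrx
    have hyc : y ≡ y0 [MOD n] := (auxRep_eq_iff hn0 hy0).mp hry
    have e1 : ((x : ℕ) : ZMod p) ^ (g.eval (x0 : ℤ)) = ((y : ℕ) : ZMod p) := by
      rw [← hpow1]
      exact (hzpow_congr _ ha _ _ (heval_congr x x0 hxc)).symm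
    have e2 : ((y : ℕ) : ZMod p) ^ (g.eval (y0 : ℤ)) = ((x : ℕ) : ZMod p) := by
      rw [← hpow2]
      exact (hzpow_congr _ hb _ _ (heval_congr y y0 hyc)).symm
    have e3 : ((x : ℕ) : ZMod p) ^ (g.eval (x0 : ℤ) * g.eval (y0 : ℤ)) = ((x : ℕ) : ZMod p) := by
      rw [zpow_mul, e1, e2]
    rw [hM, zpow_sub₀ ha, e3, zpow_one, div_self ha]
  · -- injective
    rintro ⟨x, y⟩ hxy ⟨x', y'⟩ hxy' hfe
    simp only [Finset.mem_filter, Finset.mem_product, Prod.mk.injEq] at hxy hxy'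
    obtain ⟨⟨⟨hx, hy⟩, hpx, hpy, hpow1, hpow2⟩, hrx, hry⟩ := hxy
    obtain ⟨⟨⟨hx', hy'⟩, hpx', hpy', hpow1', hpow2'⟩, hrx', hry'⟩ := hxy'
    have ha : ((x : ℕ) : ZMod p) ≠ 0 := by
      rw [Ne, ZMod.natCast_eq_zero_iff]; exact hpx
    have hxc : x ≡ x0 [MOD n] := (auxRep_eq_iff hn0 hx0).mp hrx
    have hyc : y ≡ y0 [MOD n] := (auxRep_eq_iff hn0 hy0).mp hry
    have hxc' : x' ≡ x0 [MOD n] := (auxRep_eq_iff hn0 hx0).mp hrx'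
    have hyc' : y' ≡ y0 [MOD n] := (auxRep_eq_iff hn0 hy0).mp hry'
    have hfe2 : ((x : ℕ) : ZMod p) = ((x' : ℕ) : ZMod p) := hfe
    have hxx : x = x' := hcrt_uniq x x' hx hx' hfe2 (hxc.trans hxc'.symm)
    subst hxx
    have hyy : y = y' := by
      apply hcrt_uniq y y' hy hy'
      · rw [← hpow1, ← hpow1']
      · exact hyc.trans hyc'.symm
    simp [hyy]
  · -- surjective
    intro a ha
    simp only [Finset.mem_filter, Finset.mem_univ, true_and] at ha
    obtain ⟨ha0, haM⟩ := ha
    obtain ⟨x, hxI, hxp, hxn⟩ := hcrt_ex a (x0 : ZMod n)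
    set b : ZMod p := a ^ (g.eval (x0 : ℤ)) with hb
    have hb0 : b ≠ 0 := zpow_ne_zero _ ha0
    obtain ⟨y, hyI, hyp, hyn⟩ := hcrt_ex b (y0 : ZMod n)
    have hxc : x ≡ x0 [MOD n] := (ZMod.natCast_eq_natCast_iff _ _ _).mp hxn
    have hyc : y ≡ y0 [MOD n] := (ZMod.natCast_eq_natCast_iff _ _ _).mp hyn
    refine ⟨⟨x, y⟩, ?_, hxp⟩
    simp only [Finset.mem_filter, Finset.mem_product, Prod.mk.injEq]
    refine ⟨⟨⟨hxI, hyI⟩, ?_, ?_, ?_, ?_⟩, ?_, ?_⟩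
    · rw [← ZMod.natCast_eq_zero_iff] at *
      rw [hxp]; exact ha0
    · rw [← ZMod.natCast_eq_zero_iff] at *
      rw [hyp]; exact hb0
    · rw [hxp, hyp, hb]
      exact hzpow_congr a ha0 _ _ (heval_congr x x0 hxc)
    · rw [hyp, hxp, hb]
      have h1 : b ^ (g.eval (y : ℤ)) = b ^ (g.eval (y0 : ℤ)) :=
        hzpow_congr b hb0 _ _ (heval_congr y y0 hyc)
      rw [hb] at h1
      rw [h1, ← zpow_mul]
      have h2 : g.eval (x0 : ℤ) * g.eval (y0 : ℤ) = M + 1 := by rw [hM]; ring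
      rw [h2, zpow_add₀ ha0, haM, one_mul, zpow_one]
    · exact (auxRep_eq_iff hn0 hx0).mpr hxc
    · exact (auxRep_eq_iff hn0 hy0).mpr hyc
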